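/- Let N ≥ 1 and μ₁, …, μ_N ≥ 0, λ_s > 0, λ_n > 0 be real numbers with λ_s > ∑_{i=1}^N μ_i. For r ∈ ℕ define F(r) = ∑_{s ∈ {0,1}^N} (λ_s + ∑_i s_i μ_i + λ_n)^r · exp(-(λ_s + ∑_i s_i μ_i + λ_n)) and G(r) = ∑_{s ∈ {0,1}^N} (∑_i s_i μ_i + λ_n)^r · exp(-(∑_i s_i μ_i + λ_n)). Then the function r ↦ F(r)/G(r) is monotonically increasing on ℕ. -/

import Mathlib

open Real

/-- Under the worst-case SINR condition `λ_s > ∑ i, μ i`, the maximum-likelihood decision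
metric `F(r)/G(r)` — a ratio of sums of Poisson likelihoods over all interferer activity
patterns `s ∈ {0,1}^N` — is monotonically increasing in the molecule count `r`. -/
theorem ml_metric_monotone (N : ℕ) (hN : 1 ≤ N) (μ : Fin N → ℝ) (hμ : ∀ i, 0 ≤ μ i)
    (lams lamn : ℝ) (hlams : 0 < lams) (hlamn : 0 < lamn)
    (hSINR : ∑ i, μ i < lams) :
    Monotone (fun r : ℕ =>
      (∑ s : Fin N → Bool,
          (lams + (∑ i, if s i then μ i else 0) + lamn)^r *
            Real.exp (-(lams + (∑ i, if s i then μ i else 0) + lamn))) /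
      (∑ s : Fin N → Bool,
          ((∑ i, if s i then μ i else 0) + lamn)^r *
            Real.exp (-((∑ i, if s i then μ i else 0) + lamn)))) := by
  have hMnn : ∀ s : Fin N → Bool, 0 ≤ ∑ i, if s i then μ i else 0 := fun s =>
    Finset.sum_nonneg (fun i _ => by by_cases h : s i <;> simp [h, hμ i])
  have hMle : ∀ s : Fin N → Bool, (∑ i, if s i then μ i else 0) ≤ ∑ i, μ i := fun s =>
    Finset.sum_le_sum (fun i _ => by by_cases h : s i <;> simp [h, hμ i])
  set a : (Fin N → Bool) → ℝ := fun s => lams + (∑ i, if s i then μ i else 0) + lamn with ha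
  set b : (Fin N → Bool) → ℝ := fun s => (∑ i, if s i then μ i else 0) + lamn with hb
  have hbpos : ∀ s, 0 < b s := fun s => by
    have := hMnn s; simp only [hb]; linarith
  have hapos : ∀ s, 0 < a s := fun s => by
    have := hMnn s; simp only [ha]; linarith
  have hba : ∀ s t, b t ≤ a s := fun s t => by
    have h1 := hMle t; have h2 := hMnn s
    simp only [ha, hb]; linarith
  have hG : ∀ r : ℕ, 0 < ∑ s : Fin N → Bool, (b s)^r * Real.exp (-(b s)) := fun r =>
    Finset.sum_pos (fun s _ => mul_pos (pow_pos (hbpos s) r) (Real.exp_pos _)) (by simp)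
  apply monotone_nat_of_le_succ
  intro r
  rw [div_le_div_iff₀ (hG r) (hG (r+1))]
  rw [Finset.sum_mul_sum, Finset.sum_mul_sum]
  apply Finset.sum_le_sum
  intro s _
  apply Finset.sum_le_sum
  intro t _
  have hx : 0 ≤ (a s)^r * Real.exp (-(a s)) * ((b t)^r * Real.exp (-(b t))) :=
    mul_nonneg (mul_nonneg (pow_nonneg (hapos s).le r) (Real.exp_pos _).le)
      (mul_nonneg (pow_nonneg (hbpos t).le r) (Real.exp_pos _).le)
  have key := mul_le_mul_of_nonneg_left (hba s t) hx
  calc (a s)^r * Real.exp (-(a s)) * ((b t)^(r+1) * Real.exp (-(b t)))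
      = (a s)^r * Real.exp (-(a s)) * ((b t)^r * Real.exp (-(b t))) * b t := by ring
    _ ≤ (a s)^r * Real.exp (-(a s)) * ((b t)^r * Real.exp (-(b t))) * a s := key
    _ = (a s)^(r+1) * Real.exp (-(a s)) * ((b t)^r * Real.exp (-(b t))) := by ring
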